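/- If a closed connected subset E of a space homeomorphic to ℝ² satisfies H¹(E) < ∞, then E is an exhaustion by continua: there exists a sequence of continua (Eₙ) with Eₙ ⊂ E_{n+1} and E = ⋃ₙ Eₙ. -/

import Mathlib

open MeasureTheory Set
open scoped MeasureTheory ENNReal NNReal


lemma edist_le_H1 {U : Type*} [MetricSpace U] [MeasurableSpace U] [BorelSpace U]
    {s : Set U} (hs : IsPreconnected s) {a b : U} (ha : a ∈ s) (hb : b ∈ s) :
    edist a b ≤ (μH[1] : Measure U) s := by
  have hlip : LipschitzWith 1 (dist a) := LipschitzWith.dist_right a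
  have himg : IsPreconnected (dist a '' s) := hs.image _ hlip.continuous.continuousOn
  have hIcc : Icc (0:ℝ) (dist a b) ⊆ dist a '' s := by
    refine himg.Icc_subset ⟨a, ha, dist_self a⟩ ⟨b, hb, rfl⟩
  calc edist a b = (μH[1] : Measure ℝ) (Icc 0 (dist a b)) := by
        rw [MeasureTheory.hausdorffMeasure_real, Real.volume_Icc, edist_dist,
          sub_zero]
    _ ≤ (μH[1] : Measure ℝ) (dist a '' s) := measure_mono hIcc
    _ ≤ 1 ^ (1:ℝ) * (μH[1] : Measure U) s := hlip.hausdorffMeasure_image_le zero_le_one s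
    _ = (μH[1] : Measure U) s := by simp

lemma isCompact_connectedComponentIn' {U : Type*} [MetricSpace U]
    {K : Set U} (hK : IsCompact K) (w : U) : IsCompact (connectedComponentIn K w) := by
  by_cases hw : w ∈ K
  · rw [connectedComponentIn_eq_image hw]
    haveI := isCompact_iff_compactSpace.mp hK
    exact (isClosed_connectedComponent.isCompact).image continuous_subtype_val
  · rw [connectedComponentIn_eq_empty hw]; exact isCompact_empty

lemma bump {U : Type*} [MetricSpace U] {E : Set U} (hEconn : IsConnected E)
    {z : U} {r : ℝ} (hK : IsCompact (E ∩ Metric.closedBall z r))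
    (hns : ¬ E ⊆ Metric.closedBall z r) {w : U} (hw : w ∈ E ∩ Metric.closedBall z r) :
    ∃ s ∈ connectedComponentIn (E ∩ Metric.closedBall z r) w, dist z s = r := by
  by_contra hcon
  push_neg at hcon
  set K := E ∩ Metric.closedBall z r with hKdef
  haveI : CompactSpace K := isCompact_iff_compactSpace.mp hK
  set w' : K := ⟨w, hw⟩ with hw'def
  have himg : connectedComponentIn K w = (↑) '' connectedComponent w' :=
    connectedComponentIn_eq_image hw
  set S' : Set K := {y : K | dist z (y : U) = r} with hS'def
  have hS'closed : IsClosed S' := isClosed_eq ((continuous_const.dist continuous_subtype_val)) continuous_const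
  have hS'compact : IsCompact S' := hS'closed.isCompact
  have hTS : S' ∩ ⋂ s : { s : Set K // IsClopen s ∧ w' ∈ s }, (s : Set K) = ∅ := by
    rw [← connectedComponent_eq_iInter_isClopen w']
    ext y
    simp only [mem_inter_iff, mem_empty_iff_false, iff_false, not_and]
    intro hyS hyT
    exact hcon (y : U) (himg ▸ mem_image_of_mem _ hyT) hyS
  obtain ⟨u, hu⟩ := hS'compact.elim_finite_subfamily_closed _
    (fun s : { s : Set K // IsClopen s ∧ w' ∈ s } => s.2.1.1) hTS
  set W' : Set K := ⋂ i ∈ u, (i : Set K) with hW'def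
  have hW'clopen : IsClopen W' := isClopen_biInter_finset (fun i _ => i.2.1)
  have hwW' : w' ∈ W' := mem_iInter₂.mpr fun i _ => i.2.2
  have hW'S' : W' ∩ S' = ∅ := by
    rw [inter_comm]; exact hu
  -- W := image of W' in U
  set W : Set U := (↑) '' W' with hWdef
  have hWcompact : IsCompact W := (hW'clopen.isClosed.isCompact).image continuous_subtype_val
  have hWK : W ⊆ K := by rintro x ⟨y, _, rfl⟩; exact y.2
  have hwW : w ∈ W := ⟨w', hwW', rfl⟩
  have hWlt : ∀ x ∈ W, dist z x < r := by
    rintro x ⟨y, hy, rfl⟩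
    have h1 : dist z (y : U) ≤ r := by
      have := y.2.2; simpa [Metric.mem_closedBall, dist_comm] using this
    have h2 : dist z (y : U) ≠ r := by
      intro h
      have : (y : K) ∈ W' ∩ S' := ⟨hy, h⟩
      rw [hW'S'] at this; exact this
    exact lt_of_le_of_ne h1 h2
  -- W' open in subtype gives an open O in U
  obtain ⟨O, hOopen, hOW⟩ := isOpen_induced_iff.mp hW'clopen.isOpen
  have hWOK : W = O ∩ K := by
    rw [hWdef, ← hOW, Subtype.image_preimage_coe, inter_comm]
  -- clopen subset of E
  haveI : ConnectedSpace E := Subtype.connectedSpace hEconn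
  set V : Set E := (↑) ⁻¹' W with hVdef
  have hVclosed : IsClosed V := (hWcompact.isClosed).preimage continuous_subtype_val
  have hVopen : IsOpen V := by
    have : V = (↑) ⁻¹' (O ∩ Metric.ball z r) := by
      ext y
      simp only [hVdef, mem_preimage, mem_inter_iff, Metric.mem_ball]
      constructor
      · intro hy
        refine ⟨(hWOK ▸ hy).1, ?_⟩
        rw [dist_comm]; exact hWlt _ hy
      · rintro ⟨hyO, hyb⟩
        rw [hWOK]
        exact ⟨hyO, y.2, Metric.ball_subset_closedBall (by rwa [Metric.mem_ball])⟩
    rw [this]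
    exact (hOopen.inter Metric.isOpen_ball).preimage continuous_subtype_val
  have hVuniv : V = univ := IsClopen.eq_univ ⟨hVclosed, hVopen⟩ ⟨⟨w, hw.1⟩, hwW⟩
  apply hns
  intro x hx
  have : (⟨x, hx⟩ : E) ∈ V := hVuniv ▸ mem_univ _
  exact (hWK this).2

lemma locconn {U : Type*} [MetricSpace U] [MeasurableSpace U] [BorelSpace U]
    {E : Set U} (hEconn : IsConnected E) (hEfin : (μH[1] : Measure U) E < ⊤)
    {z : U} (hz : z ∈ E) {r : ℝ} (hr : 0 < r)
    (hK : IsCompact (E ∩ Metric.closedBall z r)) (hns : ¬ E ⊆ Metric.closedBall z r) :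
    ∃ δ > 0, E ∩ Metric.ball z δ ⊆ connectedComponentIn (E ∩ Metric.closedBall z r) z := by
  classical
  set K := E ∩ Metric.closedBall z r with hKdef
  by_contra hcon
  push_neg at hcon
  set c : ℝ≥0∞ := ENNReal.ofReal (r / 2) with hcdef
  have hc0 : c ≠ 0 := by
    simp only [hcdef, ne_eq, ENNReal.ofReal_eq_zero, not_le]
    linarith
  have hctop : c ≠ ⊤ := ENNReal.ofReal_ne_top
  have main : ∀ n : ℕ, ∃ s : Finset (Set U), s.card = n ∧
      ∀ T ∈ s, (∃ w ∈ K, T = connectedComponentIn K w) ∧ z ∉ T ∧ T.Nonempty ∧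
        IsCompact T ∧ c ≤ (μH[1] : Measure U) T := by
    intro n
    induction n with
    | zero => exact ⟨∅, rfl, by simp⟩
    | succ n ih =>
      obtain ⟨s, hcard, hprop⟩ := ih
      set D : Finset ℝ := insert (r / 2) (s.image fun T => Metric.infDist z T) with hD
      have hDne : D.Nonempty := ⟨r / 2, Finset.mem_insert_self _ _⟩
      set δ : ℝ := D.min' hDne with hδdef
      have hδr : δ ≤ r / 2 := Finset.min'_le _ _ (Finset.mem_insert_self _ _)
      have hδT : ∀ T ∈ s, δ ≤ Metric.infDist z T := by
        intro T hT
        exact Finset.min'_le _ _ (Finset.mem_insert_of_mem (Finset.mem_image_of_mem _ hT))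
      have hδpos : 0 < δ := by
        rw [hδdef, Finset.lt_min'_iff]
        intro y hy
        rcases Finset.mem_insert.mp hy with h | h
        · rw [h]; linarith
        · obtain ⟨T, hT, rfl⟩ := Finset.mem_image.mp h
          obtain ⟨-, hzT, hTne, hTcomp, -⟩ := hprop T hT
          exact (hTcomp.isClosed.notMem_iff_infDist_pos hTne).mp hzT
      obtain ⟨w, ⟨hwE, hwball⟩, hwnot⟩ := Set.not_subset.mp (hcon δ hδpos)
      have hwz : dist w z < δ := Metric.mem_ball.mp hwball
      have hwK : w ∈ K := by
        refine ⟨hwE, Metric.mem_closedBall.mpr ?_⟩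
        linarith
      set T := connectedComponentIn K w with hT
      have hwT : w ∈ T := mem_connectedComponentIn hwK
      have hzT : z ∉ T := by
        intro hzT
        apply hwnot
        rw [← connectedComponentIn_eq hzT]
        exact hwT
      have hTcomp : IsCompact T := isCompact_connectedComponentIn' hK w
      have hTmeas : c ≤ (μH[1] : Measure U) T := by
        obtain ⟨p, hpT, hpz⟩ := bump hEconn hK hns hwK
        have h1 : edist w p ≤ (μH[1] : Measure U) T :=
          edist_le_H1 isPreconnected_connectedComponentIn hwT hpT
        refine le_trans ?_ h1
        rw [edist_dist]
        apply ENNReal.ofReal_le_ofReal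
        have : dist z p ≤ dist z w + dist w p := dist_triangle _ _ _
        have hzw : dist z w < δ := by rw [dist_comm]; exact hwz
        linarith
      have hTnew : T ∉ s := by
        intro hTs
        have := hδT T hTs
        have h2 : Metric.infDist z T ≤ dist z w := Metric.infDist_le_dist_of_mem hwT
        rw [dist_comm] at h2
        linarith
      refine ⟨insert T s, ?_, ?_⟩
      · rw [Finset.card_insert_of_notMem hTnew, hcard]
      · intro T' hT'
        rcases Finset.mem_insert.mp hT' with h | h
        · subst h
          exact ⟨⟨w, hwK, rfl⟩, hzT, ⟨w, hwT⟩, hTcomp, hTmeas⟩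
        · exact hprop T' h
  -- derive contradiction
  have hbound : ∀ n : ℕ, (n : ℝ≥0∞) * c ≤ (μH[1] : Measure U) E := by
    intro n
    obtain ⟨s, hcard, hprop⟩ := main n
    have hdisj : (↑s : Set (Set U)).PairwiseDisjoint id := by
      intro T₁ h₁ T₂ h₂ hne
      obtain ⟨⟨w₁, hw₁, rfl⟩, -⟩ := hprop T₁ h₁
      obtain ⟨⟨w₂, hw₂, rfl⟩, -⟩ := hprop T₂ h₂
      rw [Function.onFun, Set.disjoint_left]
      intro x hx₁ hx₂
      simp only [id] at hx₁ hx₂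
      exact hne ((connectedComponentIn_eq hx₁).trans (connectedComponentIn_eq hx₂).symm)
    have hmeas : ∀ T ∈ s, MeasurableSet (id T) := by
      intro T hT
      exact (hprop T hT).2.2.2.1.isClosed.measurableSet
    have hsum : ∑ T ∈ s, (μH[1] : Measure U) T = (μH[1] : Measure U) (⋃ T ∈ s, T) :=
      (measure_biUnion_finset hdisj hmeas).symm
    have hsub : (⋃ T ∈ s, T) ⊆ E := by
      intro x hx
      simp only [mem_iUnion] at hx
      obtain ⟨T, hT, hxT⟩ := hx
      obtain ⟨⟨w', hw', rfl⟩, -⟩ := hprop T hT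
      exact (connectedComponentIn_subset K w' hxT).1
    calc (n : ℝ≥0∞) * c = s.card • c := by rw [hcard]; simp [nsmul_eq_mul]
      _ ≤ ∑ T ∈ s, (μH[1] : Measure U) T :=
          Finset.card_nsmul_le_sum s _ c (fun T hT => (hprop T hT).2.2.2.2)
      _ = (μH[1] : Measure U) (⋃ T ∈ s, T) := hsum
      _ ≤ (μH[1] : Measure U) E := measure_mono hsub
  set M := (μH[1] : Measure U) E with hM
  obtain ⟨n, hn⟩ := ENNReal.exists_nat_gt (ENNReal.div_lt_top hEfin.ne hc0).ne
  have h1 : M / c * c < (n : ℝ≥0∞) * c := by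
    rw [ENNReal.mul_lt_mul_iff_left hc0 hctop]
    exact hn
  rw [ENNReal.div_mul_cancel hc0 hctop] at h1
  exact absurd (hbound n) (not_le.mpr h1)

/-- A closed connected subset of finite `H¹`-measure in a metric space homeomorphic to `ℝ²`
can be exhausted by an increasing sequence of continua. -/
theorem exhaustion_by_continua {U : Type*} [MetricSpace U] [MeasurableSpace U] [BorelSpace U]
    (hU : Nonempty (U ≃ₜ (ℝ × ℝ))) (E : Set U) (hEclosed : IsClosed E)
    (hEconn : IsConnected E) (hEfin : (μH[1] : Measure U) E < ⊤) :
    ∃ Eseq : ℕ → Set U, (∀ n, IsCompact (Eseq n)) ∧ (∀ n, IsConnected (Eseq n)) ∧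
      (∀ n, Eseq n ⊆ Eseq (n + 1)) ∧ (⋃ n, Eseq n) = E := by
  by_cases hEcpt : IsCompact E
  · exact ⟨fun _ => E, fun _ => hEcpt, fun _ => hEconn, fun _ => subset_rfl, iUnion_const E⟩
  obtain ⟨e⟩ := hU
  obtain ⟨x₀, hx₀⟩ := hEconn.nonempty
  -- exhaustion of U by compact sets
  set K : ℕ → Set U := fun n => e.symm '' Metric.closedBall 0 n with hKdef
  have hKcomp : ∀ n, IsCompact (K n) :=
    fun n => (isCompact_closedBall (0 : ℝ × ℝ) n).image e.symm.continuous
  have hKmono : ∀ {a b : ℕ}, a ≤ b → K a ⊆ K b := fun {a b} hab =>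
    image_mono (Metric.closedBall_subset_closedBall (by exact_mod_cast hab))
  have absorb : ∀ C : Set U, IsCompact C → ∃ m : ℕ, C ⊆ K m := by
    intro C hC
    obtain ⟨R, hR⟩ := (hC.image e.continuous).isBounded.subset_closedBall 0
    obtain ⟨m, hm⟩ := exists_nat_ge R
    refine ⟨m, ?_⟩
    intro x hx
    refine ⟨e x, Metric.closedBall_subset_closedBall hm (hR (mem_image_of_mem _ hx)), e.symm_apply_apply x⟩
  have cover : ∀ z : U, ∃ m : ℕ, ∃ ε > 0, Metric.ball z ε ⊆ K m := by
    intro z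
    obtain ⟨m, hm⟩ := exists_nat_gt (‖e z‖)
    have hopen : IsOpen (e.symm '' Metric.ball 0 m) := e.symm.isOpen_image.mpr Metric.isOpen_ball
    have hzmem : z ∈ e.symm '' Metric.ball 0 m := by
      refine ⟨e z, ?_, e.symm_apply_apply z⟩
      simpa [Metric.mem_ball, dist_zero_right] using hm
    obtain ⟨ε, hε, hball⟩ := Metric.isOpen_iff.mp hopen z hzmem
    exact ⟨m, ε, hε, hball.trans (image_mono Metric.ball_subset_closedBall)⟩
  obtain ⟨n₀, ε₀, hε₀, hball₀⟩ := cover x₀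
  have hx₀K : ∀ n, x₀ ∈ E ∩ K (n + n₀) := by
    intro n
    exact ⟨hx₀, hKmono (Nat.le_add_left n₀ n) (hball₀ (Metric.mem_ball_self hε₀))⟩
  have hEK : ∀ m, IsCompact (E ∩ K m) := fun m => (hKcomp m).inter_left hEclosed
  set Eseq : ℕ → Set U := fun n => connectedComponentIn (E ∩ K (n + n₀)) x₀ with hEseq
  have hEseqE : ∀ n, Eseq n ⊆ E := fun n =>
    (connectedComponentIn_subset _ _).trans inter_subset_left
  have hEseqCompact : ∀ n, IsCompact (Eseq n) :=
    fun n => isCompact_connectedComponentIn' (hEK _) x₀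
  have hEseqConn : ∀ n, IsConnected (Eseq n) :=
    fun n => isConnected_connectedComponentIn_iff.mpr (hx₀K n)
  have hx₀Eseq : ∀ n, x₀ ∈ Eseq n := fun n => mem_connectedComponentIn (hx₀K n)
  have hEseqMono : ∀ n, Eseq n ⊆ Eseq (n + 1) := by
    intro n
    refine IsPreconnected.subset_connectedComponentIn isPreconnected_connectedComponentIn
      (hx₀Eseq n) ?_
    refine (connectedComponentIn_subset _ _).trans ?_
    exact inter_subset_inter_right _ (hKmono (by omega))
  set C : Set U := ⋃ n, Eseq n with hC
  have hCE : C ⊆ E := iUnion_subset hEseqE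
  -- key claim
  have claim : ∀ z ∈ E, ∃ δ > 0, ∃ T : Set U, IsPreconnected T ∧ IsCompact T ∧ T ⊆ E ∧
      z ∈ T ∧ E ∩ Metric.ball z δ ⊆ T ∧ ((T ∩ C).Nonempty → T ⊆ C) := by
    intro z hz
    obtain ⟨m, ε, hε, hball⟩ := cover z
    set r : ℝ := ε / 2 with hr
    have hrpos : 0 < r := by positivity
    have hcbK : Metric.closedBall z r ⊆ K m :=
      (Metric.closedBall_subset_ball (by linarith)).trans hball
    have hKc : IsCompact (E ∩ Metric.closedBall z r) :=
      (hKcomp m).of_isClosed_subset (hEclosed.inter Metric.isClosed_closedBall)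
        ((inter_subset_right).trans hcbK)
    have hns : ¬ E ⊆ Metric.closedBall z r := by
      intro hsub
      exact hEcpt (hKc.of_isClosed_subset hEclosed (subset_inter subset_rfl hsub) |>.of_isClosed_subset hEclosed (by simp [hsub, subset_inter subset_rfl hsub]) )
    obtain ⟨δ, hδ, hδsub⟩ := locconn hEconn hEfin hz hrpos hKc hns
    set T : Set U := connectedComponentIn (E ∩ Metric.closedBall z r) z with hT
    have hzT : z ∈ T := mem_connectedComponentIn ⟨hz, Metric.mem_closedBall_self hrpos.le⟩
    refine ⟨δ, hδ, T, isPreconnected_connectedComponentIn,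
      isCompact_connectedComponentIn' hKc z,
      (connectedComponentIn_subset _ _).trans inter_subset_left, hzT, hδsub, ?_⟩
    rintro ⟨w, hwT, hwC⟩
    obtain ⟨n, hwn⟩ := mem_iUnion.mp hwC
    set Q : Set U := T ∪ Eseq n with hQ
    have hQpre : IsPreconnected Q :=
      IsPreconnected.union w hwT hwn isPreconnected_connectedComponentIn
        (hEseqConn n).isPreconnected
    have hQcomp : IsCompact Q := (isCompact_connectedComponentIn' hKc z).union (hEseqCompact n)
    obtain ⟨m', hm'⟩ := absorb Q hQcomp
    have hQE : Q ⊆ E := union_subset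
      ((connectedComponentIn_subset _ _).trans inter_subset_left) (hEseqE n)
    have hQsub : Q ⊆ E ∩ K (m' + n₀) :=
      subset_inter hQE (hm'.trans (hKmono (Nat.le_add_right m' n₀)))
    have hx₀Q : x₀ ∈ Q := Or.inr (hx₀Eseq n)
    have : Q ⊆ Eseq m' := hQpre.subset_connectedComponentIn hx₀Q hQsub
    exact (subset_union_left).trans (this.trans (subset_iUnion Eseq m'))
  -- clopen argument
  haveI : ConnectedSpace E := Subtype.connectedSpace hEconn
  set A : Set E := (↑) ⁻¹' C with hA
  have hAopen : IsOpen A := by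
    rw [Metric.isOpen_iff]
    intro y hy
    obtain ⟨δ, hδ, T, -, -, -, hyT, hball, hTC⟩ := claim y.val y.2
    refine ⟨δ, hδ, ?_⟩
    intro x hx
    have hxball : (x : U) ∈ E ∩ Metric.ball y.val δ := by
      refine ⟨x.2, ?_⟩
      rw [Metric.mem_ball, ← Subtype.dist_eq]
      exact hx
    exact hTC ⟨y.val, hyT, hy⟩ (hball hxball)
  have hAclosed : IsClosed A := by
    rw [← isOpen_compl_iff, Metric.isOpen_iff]
    intro y hy
    obtain ⟨δ, hδ, T, -, -, -, hyT, hball, hTC⟩ := claim y.val y.2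
    refine ⟨δ, hδ, ?_⟩
    intro x hx
    intro hxA
    apply hy
    have hxball : (x : U) ∈ E ∩ Metric.ball y.val δ := by
      refine ⟨x.2, ?_⟩
      rw [Metric.mem_ball, ← Subtype.dist_eq]
      exact hx
    exact hTC ⟨x.val, hball hxball, hxA⟩ hyT
  have hAuniv : A = univ :=
    IsClopen.eq_univ ⟨hAclosed, hAopen⟩ ⟨⟨x₀, hx₀⟩, mem_iUnion.mpr ⟨0, hx₀Eseq 0⟩⟩
  refine ⟨Eseq, hEseqCompact, hEseqConn, hEseqMono, ?_⟩
  refine subset_antisymm hCE ?_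
  intro x hx
  have : (⟨x, hx⟩ : E) ∈ A := hAuniv ▸ mem_univ _
  exact this
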